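/- Every real polynomial p(x,y) of degree at most d satisfying p(x,y) = c (constant) on the line x+y=1 can be written uniquely as p = c(x+y)^d + sum over 0 <= j+k <= d-1 of c_{j,k} b_{j,k}, where b_{j,k}(x,y) = x^j y^k - x^j y^k (x+y)^{d-j-k}. -/

import Mathlib

open MvPolynomial

noncomputable def bPoly (d j k : ℕ) : MvPolynomial (Fin 2) ℝ :=
  X 0 ^ j * X 1 ^ k - X 0 ^ j * X 1 ^ k * (X 0 + X 1) ^ (d - j - k)

lemma deg2 (m : Fin 2 →₀ ℕ) : m.degree = m 0 + m 1 := by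
  rw [Finsupp.degree_apply,
    Finset.sum_subset (Finset.subset_univ _)
      (fun i _ hi => Finsupp.notMem_support_iff.mp hi),
    Fin.sum_univ_two]

noncomputable def mu (j k : ℕ) : Fin 2 →₀ ℕ := Finsupp.single 0 j + Finsupp.single 1 k

lemma mu_apply0 (j k : ℕ) : mu j k 0 = j := by simp [mu, Finsupp.single_apply]
lemma mu_apply1 (j k : ℕ) : mu j k 1 = k := by simp [mu, Finsupp.single_apply]

lemma mu_eq (m : Fin 2 →₀ ℕ) : mu (m 0) (m 1) = m := by
  ext i
  fin_cases i
  · simpa using mu_apply0 (m 0) (m 1)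
  · simpa using mu_apply1 (m 0) (m 1)

lemma deg_mu (j k : ℕ) : (mu j k).degree = j + k := by
  rw [deg2, mu_apply0, mu_apply1]

lemma xpow_eq (j k : ℕ) : (X 0 : MvPolynomial (Fin 2) ℝ) ^ j * X 1 ^ k = monomial (mu j k) 1 := by
  rw [X_pow_eq_monomial, X_pow_eq_monomial, monomial_mul, mul_one, mu]

lemma eval_homog {n : ℕ} {φ : MvPolynomial (Fin 2) ℝ} (h : φ.IsHomogeneous n)
    (s : ℝ) (v : Fin 2 → ℝ) : eval (s • v) φ = s ^ n * eval v φ := by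
  rw [eval_eq, eval_eq, Finset.mul_sum]
  refine Finset.sum_congr rfl fun m hm => ?_
  have hd : m.degree = n := by
    have := h (mem_support_iff.mp hm)
    rwa [Finsupp.degree_eq_weight_one]
  simp only [Pi.smul_apply, smul_eq_mul, mul_pow, Finset.prod_mul_distrib,
    Finset.prod_pow_eq_pow_sum]
  rw [show ∑ i ∈ m.support, m i = m.degree from rfl, hd]
  ring

lemma homog_S (d : ℕ) : ((X 0 + X 1 : MvPolynomial (Fin 2) ℝ) ^ d).IsHomogeneous d := by
  simpa using ((isHomogeneous_X ℝ (0 : Fin 2)).add (isHomogeneous_X ℝ (1 : Fin 2))).pow d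

lemma homog_B {d j k : ℕ} (h : j + k ≤ d) :
    ((X 0 : MvPolynomial (Fin 2) ℝ) ^ j * X 1 ^ k * (X 0 + X 1) ^ (d - j - k)).IsHomogeneous d := by
  have h1 : ((X 0 : MvPolynomial (Fin 2) ℝ) ^ j * X 1 ^ k).IsHomogeneous (j + k) := by
    rw [xpow_eq]
    exact isHomogeneous_monomial _ (deg_mu j k)
  have := h1.mul (homog_S (d - j - k))
  convert this using 2
  omega

lemma coeff_rhs (d : ℕ) (c : ℝ) (g : ℕ × ℕ → ℝ) (m : Fin 2 →₀ ℕ) (hm : m.degree < d) :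
    coeff m (C c * (X 0 + X 1) ^ d +
      ∑ jk ∈ (Finset.range d ×ˢ Finset.range d).filter
          (fun jk => jk.1 + jk.2 < d),
        C (g jk) * bPoly d jk.1 jk.2) = g (m 0, m 1) := by
  have h1 : coeff m (C c * (X 0 + X 1) ^ d) = 0 := by
    rw [coeff_C_mul, (homog_S d).coeff_eq_zero hm.ne, mul_zero]
  have hb : ∀ jk ∈ (Finset.range d ×ˢ Finset.range d).filter
      (fun jk => jk.1 + jk.2 < d),
      coeff m (C (g jk) * bPoly d jk.1 jk.2)
        = g jk * (if mu jk.1 jk.2 = m then 1 else 0) := by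
    intro jk hjk
    have hle : jk.1 + jk.2 < d := (Finset.mem_filter.mp hjk).2
    rw [coeff_C_mul, bPoly, coeff_sub, (homog_B hle.le).coeff_eq_zero hm.ne, sub_zero,
      xpow_eq, coeff_monomial]
  rw [coeff_add, h1, zero_add, coeff_sum, Finset.sum_congr rfl hb]
  have hd2 : m 0 + m 1 < d := by rw [← deg2]; exact hm
  have hmem : (m 0, m 1) ∈ (Finset.range d ×ˢ Finset.range d).filter
      (fun jk => jk.1 + jk.2 < d) := by
    simp only [Finset.mem_filter, Finset.mem_product, Finset.mem_range]
    refine ⟨⟨?_, ?_⟩, hd2⟩ <;> omega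
  rw [Finset.sum_eq_single (m 0, m 1)]
  · rw [if_pos (mu_eq m), mul_one]
  · intro jk _ hne
    rw [if_neg, mul_zero]
    intro hmu
    exact hne (Prod.ext (by rw [← hmu, mu_apply0]) (by rw [← hmu, mu_apply1]))
  · intro h; exact absurd hmem h

lemma coeff_rhs_high (d : ℕ) (c : ℝ) (g : ℕ × ℕ → ℝ) (m : Fin 2 →₀ ℕ) (hm : d < m.degree) :
    coeff m (C c * (X 0 + X 1) ^ d +
      ∑ jk ∈ (Finset.range d ×ˢ Finset.range d).filter
          (fun jk => jk.1 + jk.2 < d),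
        C (g jk) * bPoly d jk.1 jk.2) = 0 := by
  have h1 : coeff m (C c * (X 0 + X 1) ^ d) = 0 := by
    rw [coeff_C_mul, (homog_S d).coeff_eq_zero hm.ne', mul_zero]
  rw [coeff_add, h1, zero_add, coeff_sum]
  refine Finset.sum_eq_zero fun jk hjk => ?_
  have hle : jk.1 + jk.2 < d := (Finset.mem_filter.mp hjk).2
  rw [coeff_C_mul, bPoly, coeff_sub, (homog_B hle.le).coeff_eq_zero hm.ne',
    xpow_eq, coeff_monomial, if_neg, sub_zero, mul_zero]
  intro h
  have := deg_mu jk.1 jk.2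
  rw [h] at this
  omega

theorem stmt_16 (d : ℕ) (c : ℝ) (p : MvPolynomial (Fin 2) ℝ)
    (hdeg : p.totalDegree ≤ d)
    (hc : ∀ x y : ℝ, x + y = 1 → MvPolynomial.eval ![x, y] p = c) :
    ∃! f : ℕ × ℕ → ℝ,
      (∀ jk : ℕ × ℕ, ¬ jk.1 + jk.2 < d → f jk = 0) ∧
      p = C c * (X 0 + X 1) ^ d +
        ∑ jk ∈ (Finset.range d ×ˢ Finset.range d).filter
            (fun jk => jk.1 + jk.2 < d),
          C (f jk) * bPoly d jk.1 jk.2 := by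
  set F := (Finset.range d ×ˢ Finset.range d).filter
      (fun jk : ℕ × ℕ => jk.1 + jk.2 < d) with hF
  set a : ℕ × ℕ → ℝ := fun jk =>
    if jk.1 + jk.2 < d then coeff (mu jk.1 jk.2) p else 0 with ha
  set RHS : MvPolynomial (Fin 2) ℝ :=
    C c * (X 0 + X 1) ^ d + ∑ jk ∈ F, C (a jk) * bPoly d jk.1 jk.2 with hRHS
  have key : p = RHS := by
    set r : MvPolynomial (Fin 2) ℝ := p - RHS with hr
    have hlow : ∀ m : Fin 2 →₀ ℕ, m.degree < d → coeff m r = 0 := by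
      intro m hm
      have h2 : m 0 + m 1 < d := by rw [← deg2]; exact hm
      rw [hr, coeff_sub, hRHS, coeff_rhs d c a m hm, ha]
      simp only [h2, if_pos]
      rw [mu_eq m, sub_self]
    have hhigh : ∀ m : Fin 2 →₀ ℕ, d < m.degree → coeff m r = 0 := by
      intro m hm
      have hp : coeff m p = 0 := by
        apply coeff_eq_zero_of_totalDegree_lt
        calc p.totalDegree ≤ d := hdeg
        _ < m.degree := hm
        -- degree m vs sum over support: same
      rw [hr, coeff_sub, hRHS, coeff_rhs_high d c a m hm, hp, sub_self]
    have hhom : r.IsHomogeneous d := by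
      intro m hcm
      rw [show (Finsupp.weight 1 : (Fin 2 →₀ ℕ) →+ ℕ) = Finsupp.degree from
        (Finsupp.degree_eq_weight_one).symm]
      by_contra hne
      rcases lt_or_gt_of_ne hne with h | h
      · exact hcm (hlow m h)
      · exact hcm (hhigh m h)
    have hline : ∀ x y : ℝ, x + y = 1 → eval ![x, y] r = 0 := by
      intro x y hxy
      have hterm : ∀ jk ∈ F, eval ![x, y] (C (a jk) * bPoly d jk.1 jk.2) = 0 := by
        intro jk _
        simp [bPoly, hxy]
      rw [hr, map_sub, hRHS, map_add, map_sum, Finset.sum_eq_zero hterm, hc x y hxy]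
      simp [hxy]
    have hzero : ∀ v : Fin 2 → ℝ, v 0 + v 1 ≠ 0 → eval v r = 0 := by
      intro v hs
      have hv : v = (v 0 + v 1) • ![v 0 / (v 0 + v 1), v 1 / (v 0 + v 1)] := by
        funext i
        fin_cases i <;> simp <;> field_simp
      rw [hv, eval_homog hhom, hline _ _ (by field_simp), mul_zero]
    have hmul : (X 0 + X 1 : MvPolynomial (Fin 2) ℝ) * r = 0 := by
      apply MvPolynomial.funext
      intro v
      rw [map_mul, map_zero]
      by_cases hs : v 0 + v 1 = 0
      · simp [hs]
      · rw [hzero v hs, mul_zero]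
    have hX : (X 0 + X 1 : MvPolynomial (Fin 2) ℝ) ≠ 0 := by
      intro h
      have := congrArg (eval ![(1 : ℝ), 1]) h
      simp at this
    have : r = 0 := by
      rcases mul_eq_zero.mp hmul with h | h
      · exact absurd h hX
      · exact h
    exact sub_eq_zero.mp this
  refine ⟨a, ⟨fun jk h => by simp [ha, h], key⟩, ?_⟩
  intro f ⟨h0, heq⟩
  funext jk
  by_cases h : jk.1 + jk.2 < d
  · have hm : (mu jk.1 jk.2).degree < d := by rw [deg_mu]; exact h
    have h1 := coeff_rhs d c f (mu jk.1 jk.2) hm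
    rw [← heq] at h1
    have h2 : a jk = coeff (mu jk.1 jk.2) p := by simp [ha, h]
    rw [mu_apply0, mu_apply1] at h1
    rw [h2, h1]
  · rw [h0 jk h, ha]
    simp [h]
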